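/- For x ≤ 0 and θ ∈ (π/2, π), the function g(x, θ) = tan θ + e^x sin(x tan θ) - e^x cos(x tan θ) tan θ satisfies g(x, θ) ≤ g(0, θ) = 0, since ∂g/∂x = e^x sin(x tan θ)(1 + tan²θ) ≥ 0 for x ≤ 0 (noting x tan θ ≥ 0 when x ≤ 0 and tan θ < 0). -/

import Mathlib

open Real

lemma stmt_13_deriv (t : ℝ) (y : ℝ) :
    HasDerivAt (fun y => t + Real.exp y * Real.sin (y * t) - Real.exp y * Real.cos (y * t) * t)
      (Real.exp y * Real.sin (y * t) * (1 + t ^ 2)) y := by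
  have hid : HasDerivAt (fun y : ℝ => y * t) t y := by
    simpa using (hasDerivAt_id y).mul_const t
  have hsin : HasDerivAt (fun y => Real.sin (y * t)) (Real.cos (y * t) * t) y :=
    (Real.hasDerivAt_sin _).comp y hid
  have hcos : HasDerivAt (fun y => Real.cos (y * t)) (-Real.sin (y * t) * t) y :=
    (Real.hasDerivAt_cos _).comp y hid
  have hexp : HasDerivAt Real.exp (Real.exp y) y := Real.hasDerivAt_exp y
  have h1 := ((hasDerivAt_const y t).add (hexp.mul hsin)).sub ((hexp.mul hcos).mul_const t)
  refine h1.congr_deriv ?_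
  ring

theorem stmt_13 (x θ : ℝ) (hx : x ≤ 0) (hθ : Real.pi / 2 < θ) (hθπ : θ < Real.pi) :
    Real.tan θ + Real.exp x * Real.sin (x * Real.tan θ) -
      Real.exp x * Real.cos (x * Real.tan θ) * Real.tan θ ≤ 0 := by
  set t := Real.tan θ with htdef
  have ht : t < 0 := by
    have h1 : 0 < Real.tan (π - θ) :=
      Real.tan_pos_of_pos_of_lt_pi_div_two (by linarith) (by linarith)
    rw [Real.tan_pi_sub] at h1
    linarith
  have hxt : 0 ≤ x * t := by nlinarith
  set g : ℝ → ℝ := fun y => t + Real.exp y * Real.sin (y * t) - Real.exp y * Real.cos (y * t) * t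
    with hgdef
  have hg0 : g 0 = 0 := by simp [hgdef]
  rcases le_or_gt (x * t) π with hle | hgt
  · -- monotone case
    have hmono : MonotoneOn g (Set.Icc x 0) := by
      apply monotoneOn_of_deriv_nonneg (convex_Icc x 0)
      · exact fun y _ => ((stmt_13_deriv t y).continuousAt).continuousWithinAt
      · intro y hy
        exact (stmt_13_deriv t y).differentiableAt.differentiableWithinAt
      · intro y hy
        rw [interior_Icc] at hy
        rw [(stmt_13_deriv t y).deriv]
        have h1 : 0 ≤ y * t := by nlinarith [hy.2.le]
        have h2 : y * t ≤ π := by nlinarith [hy.1, hy.2]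
        have := Real.sin_nonneg_of_nonneg_of_le_pi h1 h2
        positivity
    have hx0 : x ∈ Set.Icc x 0 := ⟨le_refl x, hx⟩
    have h0 : (0 : ℝ) ∈ Set.Icc x 0 := ⟨hx, le_refl 0⟩
    have := hmono hx0 h0 hx
    rw [hg0] at this
    simpa [hgdef] using this
  · -- direct bound case
    have hxlt : x ≤ π / t := by
      rw [le_div_iff_of_neg ht]
      linarith
    set u := x * t
    have hA : Real.sin u - t * Real.cos u ≤ Real.sqrt (1 + t ^ 2) := by
      nlinarith [Real.sq_sqrt (by positivity : (0:ℝ) ≤ 1 + t ^ 2),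
        Real.sqrt_nonneg (1 + t ^ 2), Real.sin_sq_add_cos_sq u,
        sq_nonneg (Real.cos u + t * Real.sin u),
        sq_nonneg (Real.sqrt (1 + t ^ 2) - (Real.sin u - t * Real.cos u))]
    have hkey : Real.exp (π / t) * Real.sqrt (1 + t ^ 2) ≤ -t := by
      have hs : 0 < -t := by linarith
      have he : 1 + π / (-t) ≤ Real.exp (π / (-t)) := by linarith [Real.add_one_le_exp (π / (-t))]
      have hsq : Real.sqrt (1 + t ^ 2) ≤ -t + π := by
        have h1 : 1 + t ^ 2 ≤ (-t + π) ^ 2 := by nlinarith [Real.pi_gt_three]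
        calc Real.sqrt (1 + t ^ 2) ≤ Real.sqrt ((-t + π) ^ 2) := Real.sqrt_le_sqrt h1
          _ = -t + π := by
              rw [Real.sqrt_sq (by nlinarith [Real.pi_gt_three])]
      have h2 : -t + π ≤ (-t) * Real.exp (π / (-t)) := by
        have := mul_le_mul_of_nonneg_left he hs.le
        calc -t + π = (-t) * (1 + π / (-t)) := by
              field_simp
              field_simp [ht.ne]; ring
          _ ≤ (-t) * Real.exp (π / (-t)) := this
      have h3 : Real.exp (π / t) * Real.sqrt (1 + t ^ 2)
          ≤ Real.exp (π / t) * ((-t) * Real.exp (π / (-t))) := by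
        apply mul_le_mul_of_nonneg_left (hsq.trans h2) (Real.exp_nonneg _)
      have h4 : Real.exp (π / t) * ((-t) * Real.exp (π / (-t))) = -t := by
        rw [show π / (-t) = -(π / t) by ring, Real.exp_neg]
        field_simp
      linarith
    have hexp_le : Real.exp x ≤ Real.exp (π / t) := Real.exp_le_exp.mpr hxlt
    have h5 : Real.exp x * (Real.sin u - t * Real.cos u) ≤ -t := by
      calc Real.exp x * (Real.sin u - t * Real.cos u)
          ≤ Real.exp x * Real.sqrt (1 + t ^ 2) :=
            mul_le_mul_of_nonneg_left hA (Real.exp_nonneg x)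
        _ ≤ Real.exp (π / t) * Real.sqrt (1 + t ^ 2) :=
            mul_le_mul_of_nonneg_right hexp_le (Real.sqrt_nonneg _)
        _ ≤ -t := hkey
    nlinarith [h5]
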